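/- Let (M, d) be a metric space and let γ₁, γ₂ be rays in M with γ₁(0) = γ₂(0). Then b_{γ₁}(x) + b_{γ₂}(x) ≥ 0 for all x ∈ M if and only if the map γ′ : ℝ → M defined by γ′(t) = γ₁(t) for t ≥ 0 and γ′(t) = γ₂(−t) for t ≤ 0 is a line, i.e. d(γ′(s), γ′(t)) = |s − t| for all s, t ∈ ℝ. -/

import Mathlib

open Filter Topology

variable {M : Type*} [MetricSpace M]

/-- A ray in a metric space: a map `γ` defined (in effect) on `[0, ∞)` with
`d(γ s, γ t) = |s - t|` for all `s, t ≥ 0`. -/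
def IsRay (γ : ℝ → M) : Prop :=
  ∀ s t : ℝ, 0 ≤ s → 0 ≤ t → dist (γ s) (γ t) = |s - t|

/-- A line in a metric space: a map `γ : ℝ → M` with `d(γ s, γ t) = |s - t|`. -/
def IsLine (γ : ℝ → M) : Prop :=
  ∀ s t : ℝ, dist (γ s) (γ t) = |s - t|

/-- The Busemann function of a ray `γ`:
`b_γ(x) = lim_{t → ∞} (d(x, γ t) - t)`, which exists and equals the infimum
since `t ↦ d(x, γ t) - t` is nonincreasing on `[0, ∞)` and bounded below. -/
noncomputable def busemann (γ : ℝ → M) (x : M) : ℝ :=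
  ⨅ t : Set.Ici (0 : ℝ), (dist x (γ t) - (t : ℝ))

/-- For a line `γ`, the negative ray `γ⁻(t) = γ(-t)`.  (The positive ray `γ⁺`
is just `γ` itself, restricted to `[0, ∞)`.) -/
def negRay (γ : ℝ → M) : ℝ → M := fun t => γ (-t)

/-- The barrier function of a line `γ`: `B_γ = b_{γ⁺} + b_{γ⁻}`. -/
noncomputable def barrier (γ : ℝ → M) (x : M) : ℝ :=
  busemann γ x + busemann (negRay γ) x

/-- `γ' ≺ γ`: the barrier of `γ` vanishes at `γ' 0` and both Busemann functions
`b_{γ⁺}`, `b_{γ⁻}` calibrate `γ'` (every forward translate of `γ'` is a coray to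
`γ⁺` and every backward translate is a coray to `γ⁻`). -/
def Prec (γ' γ : ℝ → M) : Prop :=
  busemann γ (γ' 0) + busemann (negRay γ) (γ' 0) = 0 ∧
  ∀ t : ℝ, busemann γ (γ' t) = busemann γ (γ' 0) - t ∧
    busemann (negRay γ) (γ' t) = busemann (negRay γ) (γ' 0) + t

/-- A geodesic metric space: any two points are joined by a minimizing geodesic
segment. -/
def IsGeodesicSpace (M : Type*) [MetricSpace M] : Prop :=
  ∀ x y : M, ∃ σ : ℝ → M, σ 0 = x ∧ σ (dist x y) = y ∧
    ∀ s t : ℝ, s ∈ Set.Icc 0 (dist x y) → t ∈ Set.Icc 0 (dist x y) →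
      dist (σ s) (σ t) = |s - t|

/-- `γ'` is a coray to the ray `γ`: there are `tᵢ → ∞`, points `xᵢ → γ' 0` and
minimal geodesic segments `cᵢ` from `xᵢ` to `γ (tᵢ)` of length `Tᵢ = d(xᵢ, γ tᵢ) → ∞`
converging to `γ'` uniformly on compact subintervals of `[0, ∞)`. -/
def IsCoray (γ' γ : ℝ → M) : Prop :=
  ∃ (t : ℕ → ℝ) (x : ℕ → M) (c : ℕ → ℝ → M),
    (∀ i, 0 ≤ t i) ∧
    Tendsto t atTop atTop ∧
    Tendsto x atTop (𝓝 (γ' 0)) ∧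
    (∀ i, c i 0 = x i) ∧
    (∀ i, c i (dist (x i) (γ (t i))) = γ (t i)) ∧
    (∀ i, ∀ s s' : ℝ, s ∈ Set.Icc 0 (dist (x i) (γ (t i))) →
      s' ∈ Set.Icc 0 (dist (x i) (γ (t i))) → dist (c i s) (c i s') = |s - s'|) ∧
    Tendsto (fun i => dist (x i) (γ (t i))) atTop atTop ∧
    (∀ K > (0 : ℝ), ∀ ε > (0 : ℝ), ∃ N : ℕ, ∀ i ≥ N,
      ∀ s ∈ Set.Icc (0 : ℝ) K, dist (c i s) (γ' s) < ε)

/-- The line `γ` has the uniqueness property: through each point of the zero set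
of `B_γ` there is at most one line `γ''` with `γ'' ≺ γ`. -/
def HasUniqueCalibLine (γ : ℝ → M) : Prop :=
  ∀ x : M, barrier γ x = 0 →
    ∀ γ₁ γ₂ : ℝ → M, IsLine γ₁ → IsLine γ₂ → γ₁ 0 = x → γ₂ 0 = x →
      Prec γ₁ γ → Prec γ₂ γ → γ₁ = γ₂

lemma busemann_bddBelow {γ : ℝ → M} (hγ : IsRay γ) (x : M) :
    BddBelow (Set.range fun t : Set.Ici (0 : ℝ) => dist x (γ t) - (t : ℝ)) := by
  refine ⟨-dist x (γ 0), ?_⟩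
  rintro _ ⟨⟨t, ht⟩, rfl⟩
  have h1 : dist (γ 0) (γ t) = |0 - t| := hγ 0 t le_rfl ht
  have h2 : dist (γ 0) (γ t) ≤ dist (γ 0) x + dist x (γ t) := dist_triangle _ _ _
  have h3 : |0 - t| = t := by rw [abs_sub_comm]; simpa using abs_of_nonneg (Set.mem_Ici.mp ht)
  have h4 : dist (γ 0) x = dist x (γ 0) := dist_comm _ _
  simp only [Set.mem_Ici] at *
  linarith [h1, h2]

lemma busemann_le {γ : ℝ → M} (hγ : IsRay γ) (x : M) {s : ℝ} (hs : 0 ≤ s) :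
    busemann γ x ≤ dist x (γ s) - s :=
  ciInf_le (busemann_bddBelow hγ x) (⟨s, hs⟩ : Set.Ici (0 : ℝ))

lemma busemann_self {γ : ℝ → M} (hγ : IsRay γ) {u : ℝ} (hu : 0 ≤ u) :
    busemann γ (γ u) = -u := by
  refine le_antisymm ?_ (le_ciInf ?_)
  · have := busemann_le hγ (γ u) hu
    rwa [hγ u u hu hu, sub_self, abs_zero, zero_sub] at this
  · rintro ⟨t, ht⟩
    simp only [Set.mem_Ici] at ht
    dsimp
    rw [hγ u t hu ht]
    have h1 : t - u ≤ |t - u| := le_abs_self _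
    rw [abs_sub_comm] at h1
    linarith

/-- for two rays `γ₁, γ₂` from the same point, `b_{γ₁} + b_{γ₂} ≥ 0`
iff the concatenation `γ'(t) = γ₁ t` for `t ≥ 0`, `γ'(t) = γ₂ (-t)` for `t ≤ 0` is
a line. -/
theorem busemann_sum_nonneg_iff_concat_isLine (γ₁ γ₂ : ℝ → M)
    (h₁ : IsRay γ₁) (h₂ : IsRay γ₂) (h0 : γ₁ 0 = γ₂ 0)
    (γ' : ℝ → M) (hγ' : ∀ t : ℝ, γ' t = if 0 ≤ t then γ₁ t else γ₂ (-t)) :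
    (∀ x : M, 0 ≤ busemann γ₁ x + busemann γ₂ x) ↔ IsLine γ' := by
  -- key mixed-case distance
  constructor
  · intro hb
    -- first prove the mixed distance formula
    have key : ∀ s u : ℝ, 0 ≤ s → 0 ≤ u → dist (γ₁ s) (γ₂ u) = s + u := by
      intro s u hs hu
      have hle : dist (γ₁ s) (γ₂ u) ≤ s + u := by
        have t1 : dist (γ₁ s) (γ₁ 0) = s := by
          rw [h₁ s 0 hs le_rfl]; simpa using abs_of_nonneg hs
        have t2 : dist (γ₂ 0) (γ₂ u) = u := by
          rw [h₂ 0 u le_rfl hu, abs_sub_comm]; simpa using abs_of_nonneg hu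
        calc dist (γ₁ s) (γ₂ u) ≤ dist (γ₁ s) (γ₁ 0) + dist (γ₁ 0) (γ₂ u) :=
              dist_triangle _ _ _
          _ = s + u := by rw [t1, h0, t2]
      have hge : s + u ≤ dist (γ₁ s) (γ₂ u) := by
        have hb2 : busemann γ₂ (γ₂ u) = -u := busemann_self h₂ hu
        have hsum := hb (γ₂ u)
        have hb1 : u ≤ busemann γ₁ (γ₂ u) := by linarith [hsum, hb2.le, hb2.ge]
        have hle1 : busemann γ₁ (γ₂ u) ≤ dist (γ₂ u) (γ₁ s) - s :=
          busemann_le h₁ (γ₂ u) hs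
        rw [dist_comm] at hle1
        linarith
      linarith
    intro s t
    rcases le_or_gt 0 s with hs | hs <;> rcases le_or_gt 0 t with ht | ht
    · rw [hγ' s, hγ' t, if_pos hs, if_pos ht]; exact h₁ s t hs ht
    · rw [hγ' s, hγ' t, if_pos hs, if_neg (not_le.mpr ht)]
      rw [key s (-t) hs (by linarith)]
      rw [abs_of_nonneg (by linarith)]; ring
    · rw [hγ' s, hγ' t, if_neg (not_le.mpr hs), if_pos ht]
      rw [dist_comm, key t (-s) ht (by linarith)]
      rw [abs_of_nonpos (by linarith)]; ring
    · rw [hγ' s, hγ' t, if_neg (not_le.mpr hs), if_neg (not_le.mpr ht)]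
      rw [h₂ (-s) (-t) (by linarith) (by linarith), ← abs_neg]
      congr 1; ring
  · intro hl x
    have key : ∀ s u : ℝ, 0 ≤ s → 0 ≤ u → dist (γ₁ s) (γ₂ u) = s + u := by
      intro s u hs hu
      have e1 : γ' s = γ₁ s := by rw [hγ' s, if_pos hs]
      have e2 : γ' (-u) = γ₂ u := by
        rcases eq_or_lt_of_le hu with h | h
        · rw [hγ' (-u), ← h]; simpa using h0
        · rw [hγ' (-u), if_neg (by simpa using not_le.mpr h : ¬ (0:ℝ) ≤ -u), neg_neg]
      have := hl s (-u)
      rw [e1, e2] at this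
      rw [this, abs_of_nonneg (by linarith)]; ring
    have h1 : -busemann γ₂ x ≤ busemann γ₁ x := by
      refine le_ciInf ?_
      rintro ⟨s, hs⟩
      simp only [Set.mem_Ici] at hs
      dsimp
      rw [neg_le, neg_sub]
      refine le_ciInf ?_
      rintro ⟨u, hu⟩
      simp only [Set.mem_Ici] at hu
      dsimp
      have htri : dist (γ₁ s) (γ₂ u) ≤ dist (γ₁ s) x + dist x (γ₂ u) := dist_triangle _ _ _
      rw [key s u hs hu, dist_comm (γ₁ s) x] at htri
      linarith
    linarith
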